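/- The probability that a uniformly random labelling of the pairs of an N-vertex set with f(N) labels is (2,2)-free equals ((f(N)-1)/f(N))^{C(N,2)} · (1 + Σ_{k=1}^{⌊N/2⌋} N!·(f(N)-1)^{-k} / ((N-2k)!·k!·2^k)). -/

import Mathlib

open Finset
open scoped Classical

/-- Defining pairs: unordered pairs of distinct vertices of `Fin N`. -/
abbrev DefPair (N : ℕ) := {p : Sym2 (Fin N) // ¬ p.IsDiag}

/-- Edge-labellings of the complete graph on `N` vertices with `M` labels;
label `0` is the distinguished label (`2`). -/
abbrev Labelling (N M : ℕ) := DefPair N → Fin M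

/-- A labelling is (2,2)-free if no two distinct pairs sharing a vertex both carry
the distinguished label, i.e. the distinguished pairs form a partial matching. -/
def TwoTwoFree {N M : ℕ} (Γ : Labelling N M) : Prop :=
  ∀ p q : DefPair N, (Γ p : ℕ) = 0 → (Γ q : ℕ) = 0 → p ≠ q →
    ∀ v : Fin N, v ∈ p.1 → v ∉ q.1

namespace TTF
variable {N : ℕ}

noncomputable def ept (e : DefPair N) (b : Bool) : Fin N :=
  if b then e.1.out.1 else e.1.out.2

lemma ept_mem (e : DefPair N) (b : Bool) : ept e b ∈ e.1 := by
  cases b <;> simp [ept, Sym2.out_fst_mem, Sym2.out_snd_mem]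

lemma ept_pair (e : DefPair N) : s(ept e true, ept e false) = e.1 := by
  simp [ept]
  exact Quot.out_eq _

lemma ept_ne (e : DefPair N) : ept e true ≠ ept e false := by
  intro h
  apply e.2
  rw [← ept_pair e]
  exact Sym2.mk_isDiag_iff.2 h

lemma ept_inj (e : DefPair N) : Function.Injective (ept e) := by
  intro b c h
  cases b <;> cases c <;> first | rfl | (exact absurd h (ept_ne e)) | (exact absurd h.symm (ept_ne e))

lemma ept_pair' (e : DefPair N) (c : Bool) : s(ept e c, ept e (!c)) = e.1 := by
  cases c
  · rw [Sym2.eq_swap]; exact ept_pair e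
  · exact ept_pair e

lemma mem_ept_iff (e : DefPair N) (v : Fin N) :
    v ∈ e.1 ↔ v = ept e true ∨ v = ept e false := by
  conv_lhs => rw [← ept_pair e]
  exact Sym2.mem_iff

def IsMatching (S : Finset (DefPair N)) : Prop :=
  ∀ p ∈ S, ∀ q ∈ S, p ≠ q → ∀ v : Fin N, v ∈ p.1 → v ∉ q.1

lemma IsMatching.two_mul_card_le {S : Finset (DefPair N)} (hS : IsMatching S) :
    2 * S.card ≤ N := by
  have hdisj : ∀ p ∈ S, ∀ q ∈ S, p ≠ q →
      Disjoint (univ.filter (· ∈ p.1)) (univ.filter (· ∈ q.1)) := by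
    intro p hp q hq hpq
    rw [Finset.disjoint_left]
    intro v hv hv'
    exact hS p hp q hq hpq v (mem_filter.1 hv).2 (mem_filter.1 hv').2
  have hcard2 : ∀ p : DefPair N, (univ.filter (· ∈ p.1)).card = 2 := by
    intro p
    have : univ.filter (· ∈ p.1) = {ept p true, ept p false} := by
      ext v; simp [mem_ept_iff]
    rw [this, card_pair (ept_ne p)]
  calc 2 * S.card = ∑ p ∈ S, (univ.filter (· ∈ p.1)).card := by
        rw [Finset.sum_congr rfl (fun p _ => hcard2 p), sum_const, smul_eq_mul, mul_comm]
    _ = (S.biUnion (fun p => univ.filter (· ∈ p.1))).card := (Finset.card_biUnion hdisj).symm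
    _ ≤ (univ : Finset (Fin N)).card := card_le_card (subset_univ _)
    _ = N := by simp

variable {k : ℕ}

def idx0 (k : ℕ) (i : Fin k) : Fin (2 * k) := ⟨2 * i.1, by omega⟩
def idx1 (k : ℕ) (i : Fin k) : Fin (2 * k) := ⟨2 * i.1 + 1, by omega⟩

def edgeAt (f : Fin (2 * k) ↪ Fin N) (i : Fin k) : DefPair N :=
  ⟨s(f (idx0 k i), f (idx1 k i)), by
    rw [Sym2.mk_isDiag_iff]
    intro h
    have := f.injective h
    simp only [idx0, idx1, Fin.mk.injEq] at this
    omega⟩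

noncomputable def edges (f : Fin (2 * k) ↪ Fin N) : Finset (DefPair N) :=
  univ.image (edgeAt f)

lemma mem_edgeAt_iff (f : Fin (2 * k) ↪ Fin N) (i : Fin k) (v : Fin N) :
    v ∈ (edgeAt f i).1 ↔ v = f (idx0 k i) ∨ v = f (idx1 k i) := Sym2.mem_iff

lemma edgeAt_injective (f : Fin (2 * k) ↪ Fin N) : Function.Injective (edgeAt f) := by
  intro i j h
  have h' : s(f (idx0 k i), f (idx1 k i)) = s(f (idx0 k j), f (idx1 k j)) :=
    congrArg Subtype.val h
  rcases Sym2.eq_iff.1 h' with ⟨h1, _⟩ | ⟨h1, _⟩ <;>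
  · have := f.injective h1
    simp only [idx0, idx1, Fin.mk.injEq] at this
    exact Fin.ext (by omega)

lemma edges_isMatching (f : Fin (2 * k) ↪ Fin N) : IsMatching (edges f) := by
  intro p hp q hq hpq v hvp hvq
  obtain ⟨i, _, rfl⟩ := mem_image.1 hp
  obtain ⟨j, _, rfl⟩ := mem_image.1 hq
  have hij : i ≠ j := fun h => hpq (by rw [h])
  rcases (mem_edgeAt_iff f i v).1 hvp with h1 | h1 <;>
    rcases (mem_edgeAt_iff f j v).1 hvq with h2 | h2 <;>
  · have := f.injective (h1.symm.trans h2)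
    simp only [idx0, idx1, Fin.mk.injEq] at this
    exact hij (Fin.ext (by omega))

lemma card_edges (f : Fin (2 * k) ↪ Fin N) : (edges f).card = k := by
  rw [edges, Finset.card_image_of_injective _ (edgeAt_injective f), card_univ, Fintype.card_fin]

section Fiber
variable {S : Finset (DefPair N)}

noncomputable def phiFun (σ : Fin k ≃ ↥S) (b : ↥S → Bool) (j : Fin (2 * k)) : Fin N :=
  ept (↑(σ ⟨j.1 / 2, by omega⟩)) (xor (decide (j.1 % 2 = 1)) (b (σ ⟨j.1 / 2, by omega⟩)))

lemma phiFun_idx0 (σ : Fin k ≃ ↥S) (b : ↥S → Bool) (i : Fin k) :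
    phiFun σ b (idx0 k i) = ept (↑(σ i)) (b (σ i)) := by
  have hi : (⟨(idx0 k i).1 / 2, by omega⟩ : Fin k) = i := Fin.ext (by simp only [idx0]; omega)
  simp only [phiFun, hi]
  have : ((idx0 k i).1 % 2 = 1) = False := eq_false (by simp only [idx0]; omega)
  simp [this]

lemma phiFun_idx1 (σ : Fin k ≃ ↥S) (b : ↥S → Bool) (i : Fin k) :
    phiFun σ b (idx1 k i) = ept (↑(σ i)) (!(b (σ i))) := by
  have hi : (⟨(idx1 k i).1 / 2, by omega⟩ : Fin k) = i := Fin.ext (by simp only [idx1]; omega)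
  simp only [phiFun, hi]
  have : ((idx1 k i).1 % 2 = 1) = True := eq_true (by simp only [idx1]; omega)
  simp [this]

lemma phiFun_injective (hS : IsMatching S) (σ : Fin k ≃ ↥S) (b : ↥S → Bool) :
    Function.Injective (phiFun σ b) := by
  intro j1 j2 h
  set i1 : Fin k := ⟨j1.1 / 2, by omega⟩ with hi1
  set i2 : Fin k := ⟨j2.1 / 2, by omega⟩ with hi2
  by_cases hii : i1 = i2
  · rw [phiFun, phiFun, ← hi1, ← hi2, ← hii] at h
    have hb := ept_inj _ h
    have h2 : j1.1 % 2 = j2.1 % 2 := by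
      by_cases h1 : j1.1 % 2 = 1 <;> by_cases hq : j2.1 % 2 = 1 <;>
        first | omega | (simp [h1, hq] at hb)
    have h3 : j1.1 / 2 = j2.1 / 2 := congrArg Fin.val hii
    exact Fin.ext (by omega)
  · exfalso
    have hne : σ i1 ≠ σ i2 := fun hc => hii (σ.injective hc)
    have hne' : (↑(σ i1) : DefPair N) ≠ ↑(σ i2) := fun hc => hne (Subtype.ext hc)
    have hm1 : phiFun σ b j1 ∈ (↑(σ i1) : DefPair N).1 := by
      rw [phiFun, ← hi1]; exact ept_mem _ _
    have hm2 : phiFun σ b j2 ∈ (↑(σ i2) : DefPair N).1 := by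
      rw [phiFun, ← hi2]; exact ept_mem _ _
    rw [h] at hm1
    exact hS _ (σ i1).2 _ (σ i2).2 hne' _ hm1 hm2

noncomputable def Phi (hS : IsMatching S) (σ : Fin k ≃ ↥S) (b : ↥S → Bool) :
    Fin (2 * k) ↪ Fin N := ⟨phiFun σ b, phiFun_injective hS σ b⟩

lemma edgeAt_Phi (hS : IsMatching S) (σ : Fin k ≃ ↥S) (b : ↥S → Bool) (i : Fin k) :
    edgeAt (Phi hS σ b) i = ↑(σ i) := by
  apply Subtype.ext
  show s(Phi hS σ b (idx0 k i), Phi hS σ b (idx1 k i)) = _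
  show s(phiFun σ b (idx0 k i), phiFun σ b (idx1 k i)) = _
  rw [phiFun_idx0, phiFun_idx1, ept_pair']

lemma edges_Phi (hS : IsMatching S) (σ : Fin k ≃ ↥S) (b : ↥S → Bool) :
    edges (Phi hS σ b) = S := by
  ext e
  simp only [edges, mem_image, mem_univ, true_and]
  constructor
  · rintro ⟨i, rfl⟩
    rw [edgeAt_Phi]
    exact (σ i).2
  · intro he
    exact ⟨σ.symm ⟨e, he⟩, by rw [edgeAt_Phi, Equiv.apply_symm_apply]⟩

end Fiber
end TTF

namespace TTF
variable {N k : ℕ} {S : Finset (DefPair N)}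

noncomputable def Phi' (hS : IsMatching S) (p : (Fin k ≃ ↥S) × (↥S → Bool)) :
    {f : Fin (2 * k) ↪ Fin N // edges f = S} :=
  ⟨Phi hS p.1 p.2, edges_Phi hS p.1 p.2⟩

lemma Phi'_injective (hS : IsMatching S) : Function.Injective (Phi' (k := k) hS) := by
  rintro ⟨σ, b⟩ ⟨σ', b'⟩ h
  have hfun : ∀ j, phiFun σ b j = phiFun σ' b' j := by
    intro j
    have := congrArg (fun x => (x.1 : Fin (2*k) → Fin N) j) h
    exact this
  have hedge : ∀ i, edgeAt (Phi hS σ b) i = edgeAt (Phi hS σ' b') i := by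
    intro i
    apply Subtype.ext
    show s(phiFun σ b _, phiFun σ b _) = s(phiFun σ' b' _, phiFun σ' b' _)
    rw [hfun, hfun]
  have hσ : σ = σ' := by
    apply Equiv.ext
    intro i
    apply Subtype.ext
    have := hedge i
    rw [edgeAt_Phi, edgeAt_Phi] at this
    exact this
  subst hσ
  have hb : b = b' := by
    funext e
    have hi := hfun (idx0 k (σ.symm e))
    rw [show phiFun σ b (idx0 k (σ.symm e)) = ept (↑(σ (σ.symm e))) (b (σ (σ.symm e))) from
          phiFun_idx0 σ b _,
        show phiFun σ b' (idx0 k (σ.symm e)) = ept (↑(σ (σ.symm e))) (b' (σ (σ.symm e))) from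
          phiFun_idx0 σ b' _] at hi
    have := ept_inj _ hi
    rwa [Equiv.apply_symm_apply] at this
  rw [hb]

lemma Phi'_surjective (hS : IsMatching S) (hk : S.card = k) :
    Function.Surjective (Phi' (k := k) hS) := by
  rintro ⟨f, hf⟩
  have hmem : ∀ i : Fin k, edgeAt f i ∈ S := by
    intro i
    rw [← hf]
    exact mem_image.2 ⟨i, mem_univ _, rfl⟩
  set σ₀ : Fin k → ↥S := fun i => ⟨edgeAt f i, hmem i⟩ with hσ₀
  have hinj : Function.Injective σ₀ := by
    intro i j h
    exact edgeAt_injective f (congrArg Subtype.val h)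
  have hbij : Function.Bijective σ₀ := by
    rw [Fintype.bijective_iff_injective_and_card]
    refine ⟨hinj, by simp [Fintype.card_coe, hk]⟩
  set σ : Fin k ≃ ↥S := Equiv.ofBijective σ₀ hbij with hσ
  have hσapp : ∀ i, (↑(σ i) : DefPair N) = edgeAt f i := fun i => rfl
  set b : ↥S → Bool := fun e => decide (f (idx0 k (σ.symm e)) = ept (↑e) true) with hb
  refine ⟨⟨σ, b⟩, ?_⟩
  apply Subtype.ext
  apply DFunLike.ext
  intro j
  -- key claim per i
  have key : ∀ i : Fin k, phiFun σ b (idx0 k i) = f (idx0 k i) ∧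
      phiFun σ b (idx1 k i) = f (idx1 k i) := by
    intro i
    have hsym : σ.symm (σ i) = i := Equiv.symm_apply_apply σ i
    have hpair : s(f (idx0 k i), f (idx1 k i))
        = s(ept (↑(σ i)) true, ept (↑(σ i)) false) := by
      rw [ept_pair, hσapp]; rfl
    rcases Sym2.eq_iff.1 hpair with ⟨h1, h2⟩ | ⟨h1, h2⟩
    · have hbe : b (σ i) = true := by
        rw [hb]; simp only [hsym]; exact decide_eq_true h1
      constructor
      · rw [phiFun_idx0, hbe, h1]
      · rw [phiFun_idx1, hbe, h2]; rfl
    · have hbe : b (σ i) = false := by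
        rw [hb]; simp only [hsym]
        apply decide_eq_false
        rw [h1]
        exact (ept_ne _).symm
      constructor
      · rw [phiFun_idx0, hbe, h1]
      · rw [phiFun_idx1, hbe, h2]; rfl
  have hj : j = idx0 k ⟨j.1 / 2, by omega⟩ ∨ j = idx1 k ⟨j.1 / 2, by omega⟩ := by
    rcases Nat.even_or_odd j.1 with ⟨m, hm⟩ | ⟨m, hm⟩
    · left; apply Fin.ext; simp only [idx0]; omega
    · right; apply Fin.ext; simp only [idx1]; omega
  show phiFun σ b j = f j
  rcases hj with hj | hj
  · rw [hj]; exact (key _).1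
  · rw [hj]; exact (key _).2

lemma card_fiber (hS : IsMatching S) (hk : S.card = k) :
    (univ.filter (fun f : Fin (2 * k) ↪ Fin N => edges f = S)).card
      = k.factorial * 2 ^ k := by
  rw [← Fintype.card_subtype]
  rw [← Fintype.card_congr (Equiv.ofBijective (Phi' hS) ⟨Phi'_injective hS, Phi'_surjective hS hk⟩)]
  rw [Fintype.card_prod, Fintype.card_equiv (Fintype.equivFinOfCardEq (by simp [Fintype.card_coe, hk])).symm]
  simp [Fintype.card_coe, hk, Fintype.card_fun]

lemma count_matchings (N k : ℕ) :
    ((univ : Finset (Finset (DefPair N))).filter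
        (fun S => IsMatching S ∧ S.card = k)).card * (k.factorial * 2 ^ k)
      = N.descFactorial (2 * k) := by
  have hcard : Fintype.card (Fin (2 * k) ↪ Fin N) = N.descFactorial (2 * k) := by
    rw [Fintype.card_embedding_eq, Fintype.card_fin, Fintype.card_fin]
  rw [← hcard, ← Finset.card_univ]
  rw [Finset.card_eq_sum_card_fiberwise
    (f := edges) (t := (univ : Finset (Finset (DefPair N))).filter
        (fun S => IsMatching S ∧ S.card = k))
    (fun f _ => mem_filter.2 ⟨mem_univ _, edges_isMatching f, card_edges f⟩)]
  rw [Finset.sum_congr rfl (fun S hS => card_fiber (mem_filter.1 hS).2.1 (mem_filter.1 hS).2.2)]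
  rw [sum_const, smul_eq_mul]

end TTF

namespace TTF
variable {N M : ℕ}

noncomputable def zeroSet (Γ : Labelling N M) : Finset (DefPair N) :=
  univ.filter (fun p => (Γ p : ℕ) = 0)

lemma mem_zeroSet {Γ : Labelling N M} {p : DefPair N} :
    p ∈ zeroSet Γ ↔ (Γ p : ℕ) = 0 := by simp [zeroSet]

lemma ttf_iff {Γ : Labelling N M} : TwoTwoFree Γ ↔ IsMatching (zeroSet Γ) := by
  constructor
  · intro h p hp q hq
    exact h p q (mem_zeroSet.1 hp) (mem_zeroSet.1 hq)
  · intro h p q hp hq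
    exact h p (mem_zeroSet.2 hp) q (mem_zeroSet.2 hq)

lemma card_pair_count : Fintype.card (DefPair N) = N.choose 2 := by
  rw [Sym2.card_subtype_not_diag, Fintype.card_fin]

lemma card_zeroSet_eq (hM : 2 ≤ M) (S : Finset (DefPair N)) :
    (univ.filter (fun Γ : Labelling N M => zeroSet Γ = S)).card
      = (M - 1) ^ (N.choose 2 - S.card) := by
  have hiff : ∀ Γ : Labelling N M, zeroSet Γ = S ↔ ∀ p, (if p ∈ S then ((Γ p : ℕ) = 0) else ((Γ p : ℕ) ≠ 0)) := by
    intro Γ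
    constructor
    · intro h p
      by_cases hp : p ∈ S <;> simp only [hp, if_true, if_false]
      · exact mem_zeroSet.1 (h ▸ hp)
      · exact fun h0 => hp (h ▸ mem_zeroSet.2 h0)
    · intro h
      ext p
      have := h p
      by_cases hp : p ∈ S <;> simp_all [mem_zeroSet]
  rw [filter_congr (fun Γ _ => by rw [hiff])]
  rw [← Fintype.card_subtype]
  rw [Fintype.card_congr (Equiv.subtypePiEquivPi
    (p := fun p (x : Fin M) => if p ∈ S then ((x : ℕ) = 0) else ((x : ℕ) ≠ 0)))]
  rw [Fintype.card_pi]
  have hzero : Fintype.card {x : Fin M // (x : ℕ) = 0} = 1 := by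
    rw [Fintype.card_eq_one_iff]
    refine ⟨⟨⟨0, by omega⟩, rfl⟩, ?_⟩
    rintro ⟨x, hx⟩
    exact Subtype.ext (Fin.ext (by simpa using hx))
  have hnz : Fintype.card {x : Fin M // (x : ℕ) ≠ 0} = M - 1 := by
    rw [Fintype.card_subtype_compl, hzero, Fintype.card_fin]
  have : ∀ p : DefPair N,
      Fintype.card {x : Fin M // if p ∈ S then ((x : ℕ) = 0) else ((x : ℕ) ≠ 0)}
        = if p ∈ S then 1 else M - 1 := by
    intro p
    by_cases hp : p ∈ S <;> simp only [hp, if_true, if_false]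
    · exact hzero
    · exact hnz
  rw [Finset.prod_congr rfl (fun p _ => this p)]
  rw [Finset.prod_ite, Finset.prod_const, Finset.prod_const, one_pow, one_mul]
  congr 1
  have hc : (filter (fun x : DefPair N => x ∉ S) univ) = Sᶜ := by ext x; simp
  rw [hc, Finset.card_compl, card_pair_count]

noncomputable def mcount (N k : ℕ) : ℕ :=
  ((univ : Finset (Finset (DefPair N))).filter (fun S => IsMatching S ∧ S.card = k)).card

lemma count_ttf (hM : 2 ≤ M) :
    (univ.filter fun Γ : Labelling N M => TwoTwoFree Γ).card
      = ∑ k ∈ range (N / 2 + 1), mcount N k * (M - 1) ^ (N.choose 2 - k) := by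
  rw [Finset.card_eq_sum_card_fiberwise
    (f := zeroSet) (t := (univ : Finset (Finset (DefPair N))).filter IsMatching)
    (fun Γ hΓ => mem_filter.2 ⟨mem_univ _, ttf_iff.1 (mem_filter.1 hΓ).2⟩)]
  have hfib : ∀ S ∈ (univ : Finset (Finset (DefPair N))).filter IsMatching,
      ((univ.filter fun Γ : Labelling N M => TwoTwoFree Γ).filter
        (fun Γ => zeroSet Γ = S)).card = (M - 1) ^ (N.choose 2 - S.card) := by
    intro S hS
    rw [← card_zeroSet_eq hM S]
    congr 1
    ext Γ
    simp only [mem_filter, mem_univ, true_and]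
    exact ⟨fun h => h.2, fun h => ⟨ttf_iff.2 (h ▸ (mem_filter.1 hS).2), h⟩⟩
  rw [Finset.sum_congr rfl hfib]
  rw [← Finset.sum_fiberwise_of_maps_to (g := Finset.card)
    (t := range (N / 2 + 1))
    (fun S hS => mem_range.2 (by
      have := IsMatching.two_mul_card_le (mem_filter.1 hS).2
      omega))]
  refine Finset.sum_congr rfl (fun k _ => ?_)
  rw [Finset.filter_filter]
  rw [Finset.sum_congr rfl (fun S hS => by rw [(mem_filter.1 hS).2.2])]
  rw [sum_const, smul_eq_mul, mcount]

-- real-valued matching count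
lemma mcount_real (N k : ℕ) (hk : 2 * k ≤ N) :
    (mcount N k : ℝ) * (((N - 2 * k).factorial : ℝ) * (k.factorial : ℝ) * 2 ^ k)
      = (N.factorial : ℝ) := by
  have h1 := count_matchings N k
  have h2 : (N - 2 * k).factorial * N.descFactorial (2 * k) = N.factorial :=
    Nat.factorial_mul_descFactorial hk
  have : (N - 2 * k).factorial * (mcount N k * (k.factorial * 2 ^ k)) = N.factorial := by
    rw [mcount, h1, h2]
  push_cast [← this]
  ring

lemma mcount_zero (N : ℕ) : mcount N 0 = 1 := by
  have h1 := count_matchings N 0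
  simpa [mcount, Nat.factorial] using h1

end TTF

theorem prob_two_two_free (N M : ℕ) (hM : 2 ≤ M) :
    ((Finset.univ.filter fun Γ : Labelling N M => TwoTwoFree Γ).card : ℝ) /
        (Fintype.card (Labelling N M) : ℝ) =
      (((M : ℝ) - 1) / (M : ℝ)) ^ (N.choose 2) *
        (1 + ∑ k ∈ Finset.Icc 1 (N / 2),
          (N.factorial : ℝ) * ((M : ℝ) - 1) ^ (-(k : ℤ)) /
            (((N - 2 * k).factorial : ℝ) * (k.factorial : ℝ) * 2 ^ k)) := by
  have hMpos : (0 : ℝ) < (M : ℝ) := by positivity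
  have hr : (0 : ℝ) < (M : ℝ) - 1 := by
    have : (2 : ℝ) ≤ (M : ℝ) := by exact_mod_cast hM
    linarith
  have hrne : ((M : ℝ) - 1) ≠ 0 := ne_of_gt hr
  have hcast : (((M - 1 : ℕ) : ℝ)) = (M : ℝ) - 1 := by
    push_cast [Nat.cast_sub (by omega : 1 ≤ M)]; ring
  have hcardL : (Fintype.card (Labelling N M) : ℝ) = (M : ℝ) ^ (N.choose 2) := by
    rw [Fintype.card_fun, Fintype.card_fin, TTF.card_pair_count]
    push_cast; ring
  rw [TTF.count_ttf hM, hcardL]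
  -- bound: k ≤ N.choose 2 for k ≤ N/2
  have hkC : ∀ k, k ≤ N / 2 → k ≤ N.choose 2 := by
    intro k hk
    rcases Nat.eq_zero_or_pos k with rfl | hkpos
    · exact Nat.zero_le _
    · have hN2 : 2 ≤ N := by omega
      calc k ≤ N / 2 := hk
        _ ≤ N * (N - 1) / 2 := Nat.div_le_div_right (Nat.le_mul_of_pos_right N (by omega))
        _ = N.choose 2 := (Nat.choose_two_right N).symm
  -- term rewrite
  have hterm : ∀ k ∈ Finset.Icc 1 (N / 2),
      ((TTF.mcount N k : ℝ) * ((M - 1 : ℕ) : ℝ) ^ (N.choose 2 - k))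
        = ((M : ℝ) - 1) ^ (N.choose 2) *
          ((N.factorial : ℝ) * ((M : ℝ) - 1) ^ (-(k : ℤ)) /
            (((N - 2 * k).factorial : ℝ) * (k.factorial : ℝ) * 2 ^ k)) := by
    intro k hk
    obtain ⟨hk1, hk2⟩ := Finset.mem_Icc.1 hk
    have h2k : 2 * k ≤ N := by
      have := Nat.div_mul_le_self N 2
      omega
    have hm := TTF.mcount_real N k h2k
    have hdne : (((N - 2 * k).factorial : ℝ) * (k.factorial : ℝ) * 2 ^ k) ≠ 0 := by
      positivity
    have hmval : (TTF.mcount N k : ℝ)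
        = (N.factorial : ℝ) / (((N - 2 * k).factorial : ℝ) * (k.factorial : ℝ) * 2 ^ k) := by
      field_simp [hdne] at hm ⊢
      linarith [hm]
    rw [hmval, hcast, pow_sub₀ _ hrne (hkC k hk2), zpow_neg, zpow_natCast]
    field_simp
  have hsplit : range (N / 2 + 1) = insert 0 (Finset.Icc 1 (N / 2)) := by
    ext x; simp; omega
  have hnum : ((∑ k ∈ range (N / 2 + 1),
        TTF.mcount N k * (M - 1) ^ (N.choose 2 - k) : ℕ) : ℝ)
      = ((M : ℝ) - 1) ^ (N.choose 2) *
        (1 + ∑ k ∈ Finset.Icc 1 (N / 2),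
          (N.factorial : ℝ) * ((M : ℝ) - 1) ^ (-(k : ℤ)) /
            (((N - 2 * k).factorial : ℝ) * (k.factorial : ℝ) * 2 ^ k)) := by
    rw [Nat.cast_sum, hsplit, Finset.sum_insert (by simp)]
    rw [Nat.cast_mul, Nat.cast_pow, TTF.mcount_zero, hcast, Nat.sub_zero, Nat.cast_one, one_mul]
    have hterm2 : ∀ k ∈ Finset.Icc 1 (N / 2),
        ((TTF.mcount N k * (M - 1) ^ (N.choose 2 - k) : ℕ) : ℝ)
          = ((M : ℝ) - 1) ^ (N.choose 2) *
            ((N.factorial : ℝ) * ((M : ℝ) - 1) ^ (-(k : ℤ)) /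
              (((N - 2 * k).factorial : ℝ) * (k.factorial : ℝ) * 2 ^ k)) := by
      intro k hk
      rw [Nat.cast_mul, Nat.cast_pow]
      exact hterm k hk
    rw [Finset.sum_congr rfl hterm2, ← Finset.mul_sum, mul_add, mul_one]
  rw [hnum, div_pow]
  ring
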